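/- Let g : ℝ² → symmetric 2×2 real matrices be smooth with det g(x) < 0 for all x; set √g := √(−det g) and let g^{αβ} denote the entries of the inverse matrix. For a smooth map X : ℝ² → ℝ^D define the Lagrangian density L[X](x) := ½ √g(x) g^{αβ}(x) ∂_αX^μ(x) ∂_βX^ν(x) G_{μν}(X(x)) + B_{μν}(X(x)) ∂_+X^μ(x) ∂_−X^ν(x), where α,β range over the two coordinates x^+, x^−. If (ζ, b) is a Killing pair, then with b̃_μ := b_μ + B_{μν}ζ^ν, for every smooth X and every x ∈ ℝ²: (d/dt)|_{t=0} L[X + t·(ζ∘X)](x) = ∂_−( b̃_μ(X)·∂_+X^μ )(x) − ∂_+( b̃_μ(X)·∂_−X^μ )(x). In particular, the first variation of the sigma-model Lagrangian under δX^μ = ζ^μ(X) is a total divergence, so Killing pairs generate rigid symmetries of the action. -/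

import Mathlib

noncomputable section

/-- Partial derivative of `f` at `x` in the `μ`-th coordinate direction. -/
def pd {D : ℕ} (μ : Fin D) (f : (Fin D → ℝ) → ℝ) (x : Fin D → ℝ) : ℝ :=
  fderiv ℝ f x (Pi.single μ 1)

/-- A smooth real-valued function. -/
def Sm {D : ℕ} (f : (Fin D → ℝ) → ℝ) : Prop := ContDiff ℝ (⊤ : ℕ∞) f

/-- A smooth vector field on `ℝ^D`. -/
def SmoothVF {D : ℕ} (V : (Fin D → ℝ) → Fin D → ℝ) : Prop := ∀ μ, Sm fun x => V x μ

/-- A smooth field of 2-tensors on `ℝ^D`. -/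
def Smooth2T {D : ℕ} (T : (Fin D → ℝ) → Fin D → Fin D → ℝ) : Prop :=
  ∀ μ ν, Sm fun x => T x μ ν

/-- The connection coefficients `Γ_{μν,ρ} = ½(∂_μG_{νρ} + ∂_νG_{μρ} − ∂_ρG_{μν})`. -/
def Gam {D : ℕ} (G : (Fin D → ℝ) → Fin D → Fin D → ℝ) (μ ν ρ : Fin D) (x : Fin D → ℝ) : ℝ :=
  (pd μ (fun y => G y ν ρ) x + pd ν (fun y => G y μ ρ) x - pd ρ (fun y => G y μ ν) x) / 2

/-- The torsion `H_{μνρ} = ∂_μB_{νρ} + ∂_νB_{ρμ} + ∂_ρB_{μν}`. -/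
def Htor {D : ℕ} (B : (Fin D → ℝ) → Fin D → Fin D → ℝ) (μ ν ρ : Fin D) (x : Fin D → ℝ) : ℝ :=
  pd μ (fun y => B y ν ρ) x + pd ν (fun y => B y ρ μ) x + pd ρ (fun y => B y μ ν) x

/-- `Γ⁺_{μν,ρ} = Γ_{μν,ρ} + ½H_{μνρ}`. -/
def GamP {D : ℕ} (G B : (Fin D → ℝ) → Fin D → Fin D → ℝ) (μ ν ρ : Fin D) (x : Fin D → ℝ) : ℝ :=
  Gam G μ ν ρ x + Htor B μ ν ρ x / 2

/-- `Γ⁻_{μν,ρ} = Γ_{μν,ρ} − ½H_{μνρ}`. -/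
def GamM {D : ℕ} (G B : (Fin D → ℝ) → Fin D → Fin D → ℝ) (μ ν ρ : Fin D) (x : Fin D → ℝ) : ℝ :=
  Gam G μ ν ρ x - Htor B μ ν ρ x / 2

/-- The lowered components `V_μ = G_{μν}V^ν` of a vector field. -/
def lowerV {D : ℕ} (G : (Fin D → ℝ) → Fin D → Fin D → ℝ)
    (V : (Fin D → ℝ) → Fin D → ℝ) (μ : Fin D) (x : Fin D → ℝ) : ℝ :=
  ∑ ν, G x μ ν * V x ν

/-- The covariant derivative `D⁺_μV_ν = G_{νρ}∂_μV^ρ + Γ⁺_{μρ,ν}V^ρ`. -/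
def Dp {D : ℕ} (G B : (Fin D → ℝ) → Fin D → Fin D → ℝ)
    (V : (Fin D → ℝ) → Fin D → ℝ) (μ ν : Fin D) (x : Fin D → ℝ) : ℝ :=
  (∑ ρ, G x ν ρ * pd μ (fun y => V y ρ) x) + ∑ ρ, GamP G B μ ρ ν x * V x ρ

/-- The covariant derivative `D⁻_μV_ν = G_{νρ}∂_μV^ρ + Γ⁻_{μρ,ν}V^ρ`. -/
def Dm {D : ℕ} (G B : (Fin D → ℝ) → Fin D → Fin D → ℝ)
    (V : (Fin D → ℝ) → Fin D → ℝ) (μ ν : Fin D) (x : Fin D → ℝ) : ℝ :=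
  (∑ ρ, G x ν ρ * pd μ (fun y => V y ρ) x) + ∑ ρ, GamM G B μ ρ ν x * V x ρ

/-- The Lie derivative of the metric:
`(ℒ_ζG)_{μν} = ζ^ρ∂_ρG_{μν} + ∂_μζ^ρ·G_{ρν} + ∂_νζ^ρ·G_{μρ}`. -/
def lieG {D : ℕ} (G : (Fin D → ℝ) → Fin D → Fin D → ℝ)
    (ζ : (Fin D → ℝ) → Fin D → ℝ) (μ ν : Fin D) (x : Fin D → ℝ) : ℝ :=
  (∑ ρ, ζ x ρ * pd ρ (fun y => G y μ ν) x)
    + (∑ ρ, pd μ (fun y => ζ y ρ) x * G x ρ ν)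
    + ∑ ρ, pd ν (fun y => ζ y ρ) x * G x μ ρ

/-- A Killing pair `(ζ, b)`: `D⁻_μζ_ν + D⁺_νζ_μ + ∂_μb_ν − ∂_νb_μ = 0`. -/
def IsKillingPair {D : ℕ} (G B : (Fin D → ℝ) → Fin D → Fin D → ℝ)
    (ζ b : (Fin D → ℝ) → Fin D → ℝ) : Prop :=
  ∀ (μ ν : Fin D) (x : Fin D → ℝ),
    Dm G B ζ μ ν x + Dp G B ζ ν μ x
      + pd μ (fun y => b y ν) x - pd ν (fun y => b y μ) x = 0

/-- The sigma-model Lagrangian density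
`½√g g^{αβ} ∂_αX^μ ∂_βX^ν G_{μν}(X) + B_{μν}(X) ∂₊X^μ ∂₋X^ν`;
the world-sheet coordinates are `x⁺ = 0`, `x⁻ = 1` and `√g = √(−det g)`. -/
def Lag {D : ℕ} (G B : (Fin D → ℝ) → Fin D → Fin D → ℝ)
    (g : (Fin 2 → ℝ) → Matrix (Fin 2) (Fin 2) ℝ)
    (X : (Fin 2 → ℝ) → Fin D → ℝ) (x : Fin 2 → ℝ) : ℝ :=
  (Real.sqrt (-(g x).det) *
      ∑ α, ∑ β, (g x)⁻¹ α β *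
        ∑ μ, ∑ ν, pd α (fun y => X y μ) x * pd β (fun y => X y ν) x * G (X x) μ ν) / 2
    + ∑ μ, ∑ ν, B (X x) μ ν * pd 0 (fun y => X y μ) x * pd 1 (fun y => X y ν) x

open Finset


lemma clm_pi_eval {D : ℕ} (L : (Fin D → ℝ) →L[ℝ] ℝ) (v : Fin D → ℝ) :
    L v = ∑ ρ, v ρ * L (Pi.single ρ 1) := by
  conv_lhs => rw [← Finset.univ_sum_single v]
  rw [map_sum]
  refine Finset.sum_congr rfl fun ρ _ => ?_
  have h : (Pi.single ρ (v ρ) : Fin D → ℝ) = v ρ • (Pi.single ρ (1:ℝ) : Fin D → ℝ) := by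
    rw [← Pi.single_smul, smul_eq_mul, mul_one]
  rw [h, map_smul, smul_eq_mul]

lemma Sm.diff {D : ℕ} {f : (Fin D → ℝ) → ℝ} (hf : Sm f) : Differentiable ℝ f :=
  hf.differentiable (by simp)

lemma sm_pd {D : ℕ} {f : (Fin D → ℝ) → ℝ} (hf : Sm f) (α : Fin D) :
    Sm (fun y => pd α f y) := by
  have h1 : ContDiff ℝ (⊤ : ℕ∞) (fderiv ℝ f) := hf.fderiv_right (m := (⊤:ℕ∞)) (by simp)
  exact (ContinuousLinearMap.apply ℝ ℝ (Pi.single α (1:ℝ))).contDiff.comp h1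

lemma sm_comp {n D : ℕ} {f : (Fin D → ℝ) → ℝ} (hf : Sm f)
    {X : (Fin n → ℝ) → Fin D → ℝ} (hX : ∀ μ, ContDiff ℝ (⊤ : ℕ∞) fun y => X y μ) :
    Sm fun y => f (X y) :=
  hf.comp (contDiff_pi.mpr hX)

lemma pd_comp {n D : ℕ} {f : (Fin D → ℝ) → ℝ} (hf : Sm f)
    {X : (Fin n → ℝ) → Fin D → ℝ} (hX : ∀ μ, ContDiff ℝ (⊤ : ℕ∞) fun y => X y μ)
    (α : Fin n) (x : Fin n → ℝ) :
    pd α (fun y => f (X y)) x = ∑ ρ, pd ρ f (X x) * pd α (fun y => X y ρ) x := by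
  have hXd : DifferentiableAt ℝ (fun y => (X y : Fin D → ℝ)) x :=
    ((contDiff_pi.mpr hX).differentiable (by simp)) x
  have hfd : DifferentiableAt ℝ f (X x) := hf.diff (X x)
  have hc : pd α (fun y => f (X y)) x
      = fderiv ℝ f (X x) (fderiv ℝ (fun y => (X y : Fin D → ℝ)) x (Pi.single α 1)) := by
    have := fderiv_comp x hfd hXd
    rw [pd, show (fun y => f (X y)) = f ∘ (fun y => X y) from rfl, this,
      ContinuousLinearMap.comp_apply]
  have hp : ∀ ρ, (fderiv ℝ (fun y => (X y : Fin D → ℝ)) x (Pi.single α 1)) ρ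
      = pd α (fun y => X y ρ) x := by
    intro ρ
    rw [fderiv_pi (fun i => ((hX i).differentiable (by simp)).differentiableAt)]
    simp [ContinuousLinearMap.pi_apply, pd]
  rw [hc, clm_pi_eval]
  exact Finset.sum_congr rfl fun ρ _ => by rw [hp ρ]; exact mul_comm _ _

lemma hasDerivAt_line {D : ℕ} {f : (Fin D → ℝ) → ℝ} (hf : Sm f) (z v : Fin D → ℝ) :
    HasDerivAt (fun t : ℝ => f (z + t • v)) (∑ ρ, v ρ * pd ρ f z) 0 := by
  have hline : HasDerivAt (fun t : ℝ => z + t • v) v 0 := by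
    simpa using ((hasDerivAt_id (0:ℝ)).smul_const v).const_add z
  have hfd : HasFDerivAt f (fderiv ℝ f z) (z + (0:ℝ) • v) := by
    simpa using (hf.diff (z + (0:ℝ) • v)).hasFDerivAt
  have h2 := hfd.comp_hasDerivAt (x := (0:ℝ)) hline
  have e : (∑ ρ, v ρ * pd ρ f z) = fderiv ℝ f z v := by
    rw [clm_pi_eval]; rfl
  rw [e]
  exact h2

lemma pd_comm {f : (Fin 2 → ℝ) → ℝ} (hf : Sm f) (α β : Fin 2) (x : Fin 2 → ℝ) :
    pd α (fun y => pd β f y) x = pd β (fun y => pd α f y) x := by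
  have hsym : IsSymmSndFDerivAt ℝ f x :=
    (hf.contDiffAt).isSymmSndFDerivAt (n := ((⊤:ℕ∞) : WithTop ℕ∞))
      (by rw [show ((2:WithTop ℕ∞)) = ((2:ℕ∞) : WithTop ℕ∞) by rfl]
          simp only [minSmoothness_of_isRCLikeNormedField]; exact WithTop.coe_le_coe.mpr le_top)
  have hfd : ContDiff ℝ (⊤:ℕ∞) (fderiv ℝ f) := hf.fderiv_right (m := (⊤:ℕ∞)) (by simp)
  have key : ∀ (u w : Fin 2 → ℝ),
      fderiv ℝ (fun y => fderiv ℝ f y u) x w = fderiv ℝ (fderiv ℝ f) x w u := by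
    intro u w
    rw [fderiv_clm_apply ((hfd.differentiable (by simp)).differentiableAt)
      (differentiableAt_const u)]
    simp
  simp only [pd]
  rw [key, key, hsym.eq]
lemma pd_add {D : ℕ} {f g : (Fin D → ℝ) → ℝ} {x : Fin D → ℝ}
    (hf : DifferentiableAt ℝ f x) (hg : DifferentiableAt ℝ g x) (α : Fin D) :
    pd α (fun y => f y + g y) x = pd α f x + pd α g x := by
  simp [pd, fderiv_fun_add hf hg]

lemma pd_const_mul {D : ℕ} {f : (Fin D → ℝ) → ℝ} {x : Fin D → ℝ}
    (hf : DifferentiableAt ℝ f x) (c : ℝ) (α : Fin D) :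
    pd α (fun y => c * f y) x = c * pd α f x := by
  simp [pd, fderiv_const_mul hf c]

lemma pd_mul {D : ℕ} {f g : (Fin D → ℝ) → ℝ} {x : Fin D → ℝ}
    (hf : DifferentiableAt ℝ f x) (hg : DifferentiableAt ℝ g x) (α : Fin D) :
    pd α (fun y => f y * g y) x = f x * pd α g x + g x * pd α f x := by
  simp [pd, fderiv_fun_mul hf hg]

lemma pd_sum {D : ℕ} {ι : Type*} {s : Finset ι} {f : ι → (Fin D → ℝ) → ℝ} {x : Fin D → ℝ}
    (hf : ∀ i ∈ s, DifferentiableAt ℝ (f i) x) (α : Fin D) :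
    pd α (fun y => ∑ i ∈ s, f i y) x = ∑ i ∈ s, pd α (f i) x := by
  simp [pd, fderiv_fun_sum hf]


lemma pd_neg {D : ℕ} {f : (Fin D → ℝ) → ℝ} (α : Fin D) (x : Fin D → ℝ) :
    pd α (fun y => -f y) x = -pd α f x := by
  simp [pd, fderiv_neg]

def pK {D : ℕ} (G B : (Fin D → ℝ) → Fin D → Fin D → ℝ)
    (ζ : (Fin D → ℝ) → Fin D → ℝ) (z : Fin D → ℝ) (μ ν ρ : Fin D) : ℝ :=
  G z ν ρ * pd μ (fun y => ζ y ρ) z + GamM G B μ ρ ν z * ζ z ρ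
    + (G z μ ρ * pd ν (fun y => ζ y ρ) z + GamP G B ν ρ μ z * ζ z ρ)

lemma killing_facts {D : ℕ} (G B : (Fin D → ℝ) → Fin D → Fin D → ℝ)
    (hGsym : ∀ x μ ν, G x μ ν = G x ν μ) (hBanti : ∀ x μ ν, B x μ ν = -B x ν μ)
    (ζ b : (Fin D → ℝ) → Fin D → ℝ) (hK : IsKillingPair G B ζ b) (z : Fin D → ℝ) :
    (∀ μ ν, lieG G ζ μ ν z = 0) ∧
    (∀ μ ν, (∑ ρ, ζ z ρ * Htor B μ ν ρ z)
        = pd ν (fun y => b y μ) z - pd μ (fun y => b y ν) z) := by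
  have hGpd : ∀ (a c d : Fin D), pd a (fun y => G y c d) z = pd a (fun y => G y d c) z := by
    intro a c d
    rw [show (fun y => G y c d) = (fun y => G y d c) from funext fun y => hGsym y c d]
  have hBpd : ∀ (a c d : Fin D), pd a (fun y => B y c d) z = -pd a (fun y => B y d c) z := by
    intro a c d
    rw [show (fun y => B y c d) = (fun y => -B y d c) from funext fun y => hBanti y c d]
    exact pd_neg a z
  have hS : ∀ μ ν, Dm G B ζ μ ν z + Dp G B ζ ν μ z = ∑ ρ, pK G B ζ z μ ν ρ := by
    intro μ ν
    simp only [Dm, Dp, pK]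
    rw [Finset.sum_add_distrib]
    rw [show (∑ ρ, (G z ν ρ * pd μ (fun y => ζ y ρ) z + GamM G B μ ρ ν z * ζ z ρ))
        = (∑ ρ, G z ν ρ * pd μ (fun y => ζ y ρ) z) + ∑ ρ, GamM G B μ ρ ν z * ζ z ρ from
      Finset.sum_add_distrib]
    rw [show (∑ ρ, (G z μ ρ * pd ν (fun y => ζ y ρ) z + GamP G B ν ρ μ z * ζ z ρ))
        = (∑ ρ, G z μ ρ * pd ν (fun y => ζ y ρ) z) + ∑ ρ, GamP G B ν ρ μ z * ζ z ρ from
      Finset.sum_add_distrib]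
  have hKK : ∀ μ ν, (∑ ρ, pK G B ζ z μ ν ρ)
      = pd ν (fun y => b y μ) z - pd μ (fun y => b y ν) z := by
    intro μ ν
    have h1 := hK μ ν z
    have h2 := hS μ ν
    linarith
  have hi : ∀ μ ν ρ, (pK G B ζ z μ ν ρ + pK G B ζ z ν μ ρ) / 2
      = ζ z ρ * pd ρ (fun y => G y μ ν) z
        + pd μ (fun y => ζ y ρ) z * G z ρ ν + pd ν (fun y => ζ y ρ) z * G z μ ρ := by
    intro μ ν ρ
    simp only [pK, GamM, GamP, Gam]
    linear_combination (ζ z ρ / 2) * hGpd μ ρ ν + (ζ z ρ / 2) * hGpd ν ρ μ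
      + (ζ z ρ / 2) * hGpd ρ ν μ - (pd μ (fun y => ζ y ρ) z) * hGsym z ρ ν
  have hii : ∀ μ ν ρ, pK G B ζ z μ ν ρ - pK G B ζ z ν μ ρ
      = 2 * (ζ z ρ * Htor B μ ν ρ z) := by
    intro μ ν ρ
    simp only [pK, GamM, GamP, Gam, Htor]
    linear_combination (-(ζ z ρ)) * hBpd ν μ ρ + (-(ζ z ρ)) * hBpd ρ ν μ
      + (-(ζ z ρ)) * hBpd μ ρ ν
  constructor
  · intro μ ν
    have e1 : lieG G ζ μ ν z = ∑ ρ, ((pK G B ζ z μ ν ρ + pK G B ζ z ν μ ρ) / 2) := by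
      simp only [lieG]
      rw [← Finset.sum_add_distrib, ← Finset.sum_add_distrib]
      exact Finset.sum_congr rfl fun ρ _ => (hi μ ν ρ).symm
    rw [e1]
    rw [show (∑ ρ, ((pK G B ζ z μ ν ρ + pK G B ζ z ν μ ρ) / 2))
        = ((∑ ρ, pK G B ζ z μ ν ρ) + ∑ ρ, pK G B ζ z ν μ ρ) / 2 from by
      rw [← Finset.sum_add_distrib, Finset.sum_div]]
    rw [hKK μ ν, hKK ν μ]; ring
  · intro μ ν
    have e1 : (∑ ρ, ζ z ρ * Htor B μ ν ρ z)
        = ((∑ ρ, pK G B ζ z μ ν ρ) - ∑ ρ, pK G B ζ z ν μ ρ) / 2 := by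
      rw [← Finset.sum_sub_distrib, Finset.sum_div]
      exact Finset.sum_congr rfl fun ρ _ => by
        rw [hii μ ν ρ]; ring
    rw [e1, hKK μ ν, hKK ν μ]; ring


lemma sum3_swap13 {D : ℕ} (f : Fin D → Fin D → Fin D → ℝ) :
    ∑ μ, ∑ ν, ∑ ρ, f μ ν ρ = ∑ μ, ∑ ν, ∑ ρ, f ρ ν μ := by
  rw [show (∑ μ, ∑ ν, ∑ ρ, f μ ν ρ) = ∑ μ, ∑ ρ, ∑ ν, f μ ν ρ from
    Finset.sum_congr rfl fun μ _ => Finset.sum_comm, Finset.sum_comm]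
  exact Finset.sum_congr rfl fun μ _ => Finset.sum_comm

lemma sum3_swap23 {D : ℕ} (f : Fin D → Fin D → Fin D → ℝ) :
    ∑ μ, ∑ ν, ∑ ρ, f μ ν ρ = ∑ μ, ∑ ν, ∑ ρ, f μ ρ ν :=
  Finset.sum_congr rfl fun μ _ => Finset.sum_comm

lemma key_contract {D : ℕ} (Pa Pb : Fin D → ℝ) (dζ G0 W L : Fin D → Fin D → ℝ)
    (hL : ∀ μ ν, L μ ν = W μ ν + (∑ ρ, dζ μ ρ * G0 ρ ν) + ∑ ρ, dζ ν ρ * G0 μ ρ) :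
    ∑ μ, ∑ ν, ((∑ ρ, dζ ρ μ * Pa ρ) * Pb ν * G0 μ ν
        + Pa μ * (∑ ρ, dζ ρ ν * Pb ρ) * G0 μ ν + Pa μ * Pb ν * W μ ν)
    = ∑ μ, ∑ ν, Pa μ * Pb ν * L μ ν := by
  have e1 : ∑ μ, ∑ ν, (∑ ρ, dζ ρ μ * Pa ρ) * Pb ν * G0 μ ν
      = ∑ μ, ∑ ν, Pa μ * Pb ν * ∑ ρ, dζ μ ρ * G0 ρ ν := by
    have := sum3_swap13 (fun μ ν ρ => dζ ρ μ * Pa ρ * Pb ν * G0 μ ν)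
    calc ∑ μ, ∑ ν, (∑ ρ, dζ ρ μ * Pa ρ) * Pb ν * G0 μ ν
        = ∑ μ, ∑ ν, ∑ ρ, dζ ρ μ * Pa ρ * Pb ν * G0 μ ν := by
          refine Finset.sum_congr rfl fun μ _ => Finset.sum_congr rfl fun ν _ => ?_
          rw [Finset.sum_mul, Finset.sum_mul]
      _ = ∑ μ, ∑ ν, ∑ ρ, dζ μ ρ * Pa μ * Pb ν * G0 ρ ν := this
      _ = ∑ μ, ∑ ν, Pa μ * Pb ν * ∑ ρ, dζ μ ρ * G0 ρ ν := by
          refine Finset.sum_congr rfl fun μ _ => Finset.sum_congr rfl fun ν _ => ?_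
          rw [Finset.mul_sum]; exact Finset.sum_congr rfl fun ρ _ => by ring
  have e2 : ∑ μ, ∑ ν, Pa μ * (∑ ρ, dζ ρ ν * Pb ρ) * G0 μ ν
      = ∑ μ, ∑ ν, Pa μ * Pb ν * ∑ ρ, dζ ν ρ * G0 μ ρ := by
    calc ∑ μ, ∑ ν, Pa μ * (∑ ρ, dζ ρ ν * Pb ρ) * G0 μ ν
        = ∑ μ, ∑ ν, ∑ ρ, Pa μ * (dζ ρ ν * Pb ρ) * G0 μ ν := by
          refine Finset.sum_congr rfl fun μ _ => Finset.sum_congr rfl fun ν _ => ?_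
          rw [Finset.mul_sum, Finset.sum_mul]
      _ = ∑ μ, ∑ ν, ∑ ρ, Pa μ * (dζ ν ρ * Pb ν) * G0 μ ρ :=
          sum3_swap23 (fun μ ν ρ => Pa μ * (dζ ρ ν * Pb ρ) * G0 μ ν)
      _ = ∑ μ, ∑ ν, Pa μ * Pb ν * ∑ ρ, dζ ν ρ * G0 μ ρ := by
          refine Finset.sum_congr rfl fun μ _ => Finset.sum_congr rfl fun ν _ => ?_
          rw [Finset.mul_sum]; exact Finset.sum_congr rfl fun ρ _ => by ring
  calc ∑ μ, ∑ ν, ((∑ ρ, dζ ρ μ * Pa ρ) * Pb ν * G0 μ ν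
        + Pa μ * (∑ ρ, dζ ρ ν * Pb ρ) * G0 μ ν + Pa μ * Pb ν * W μ ν)
      = (∑ μ, ∑ ν, (∑ ρ, dζ ρ μ * Pa ρ) * Pb ν * G0 μ ν)
        + (∑ μ, ∑ ν, Pa μ * (∑ ρ, dζ ρ ν * Pb ρ) * G0 μ ν)
        + ∑ μ, ∑ ν, Pa μ * Pb ν * W μ ν := by
        rw [← Finset.sum_add_distrib, ← Finset.sum_add_distrib]
        refine Finset.sum_congr rfl fun μ _ => ?_
        rw [← Finset.sum_add_distrib, ← Finset.sum_add_distrib]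
    _ = ∑ μ, ∑ ν, Pa μ * Pb ν * L μ ν := by
        rw [e1, e2, ← Finset.sum_add_distrib, ← Finset.sum_add_distrib]
        refine Finset.sum_congr rfl fun μ _ => ?_
        rw [← Finset.sum_add_distrib, ← Finset.sum_add_distrib]
        refine Finset.sum_congr rfl fun ν _ => ?_
        rw [hL]; ring

lemma rhs_contract {D : ℕ} (P0 P1 : Fin D → ℝ) (C : Fin D → Fin D → ℝ) :
    (∑ μ, ∑ ρ, C ρ μ * P1 ρ * P0 μ) - ∑ μ, ∑ ρ, C ρ μ * P0 ρ * P1 μ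
      = ∑ μ, ∑ ν, P0 μ * P1 ν * (C ν μ - C μ ν) := by
  have h2 : (∑ μ, ∑ ρ, C ρ μ * P0 ρ * P1 μ) = ∑ μ, ∑ ν, C μ ν * P0 μ * P1 ν :=
    Finset.sum_comm
  rw [h2, ← Finset.sum_sub_distrib]
  refine Finset.sum_congr rfl fun μ _ => ?_
  rw [← Finset.sum_sub_distrib]
  exact Finset.sum_congr rfl fun ν _ => by ring

lemma deriv_lag {D : ℕ} (G B : (Fin D → ℝ) → Fin D → Fin D → ℝ)
    (hGs : Smooth2T G) (hBs : Smooth2T B)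
    (g : (Fin 2 → ℝ) → Matrix (Fin 2) (Fin 2) ℝ)
    (ζ : (Fin D → ℝ) → Fin D → ℝ) (hζ : SmoothVF ζ)
    (X : (Fin 2 → ℝ) → Fin D → ℝ) (hX : ∀ μ, ContDiff ℝ (⊤ : ℕ∞) fun y => X y μ)
    (x : Fin 2 → ℝ) :
    deriv (fun t : ℝ => Lag G B g (fun y μ => X y μ + t * ζ (X y) μ) x) 0 =
      (Real.sqrt (-(g x).det) * ∑ α, ∑ β, (g x)⁻¹ α β * ∑ μ, ∑ ν,
        (pd α (fun y => ζ (X y) μ) x * pd β (fun y => X y ν) x * G (X x) μ ν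
          + pd α (fun y => X y μ) x * pd β (fun y => ζ (X y) ν) x * G (X x) μ ν
          + pd α (fun y => X y μ) x * pd β (fun y => X y ν) x *
              ∑ ρ, ζ (X x) ρ * pd ρ (fun w => G w μ ν) (X x))) / 2
      + ∑ μ, ∑ ν,
          ((∑ ρ, ζ (X x) ρ * pd ρ (fun w => B w μ ν) (X x)) * pd 0 (fun y => X y μ) x
              * pd 1 (fun y => X y ν) x
            + B (X x) μ ν * pd 0 (fun y => ζ (X y) μ) x * pd 1 (fun y => X y ν) x
            + B (X x) μ ν * pd 0 (fun y => X y μ) x * pd 1 (fun y => ζ (X y) ν) x) := by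
  have hpd : ∀ (t : ℝ) (α : Fin 2) (μ : Fin D),
      pd α (fun y => X y μ + t * ζ (X y) μ) x
        = pd α (fun y => X y μ) x + t * pd α (fun y => ζ (X y) μ) x := by
    intro t α μ
    have h1 : DifferentiableAt ℝ (fun y => X y μ) x := ((Sm.diff (hX μ))).differentiableAt
    have h2 : DifferentiableAt ℝ (fun y => ζ (X y) μ) x :=
      ((sm_comp (hζ μ) hX).diff).differentiableAt
    rw [pd_add h1 (h2.const_mul t) α, pd_const_mul h2 t α]
  have harg : ∀ t : ℝ, (fun μ => X x μ + t * ζ (X x) μ) = X x + t • ζ (X x) := by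
    intro t; funext μ; simp
  have hfun : (fun t : ℝ => Lag G B g (fun y μ => X y μ + t * ζ (X y) μ) x) = fun t : ℝ =>
      (Real.sqrt (-(g x).det) * ∑ α, ∑ β, (g x)⁻¹ α β * ∑ μ, ∑ ν,
        (pd α (fun y => X y μ) x + t * pd α (fun y => ζ (X y) μ) x) *
        (pd β (fun y => X y ν) x + t * pd β (fun y => ζ (X y) ν) x) *
        G (X x + t • ζ (X x)) μ ν) / 2
      + ∑ μ, ∑ ν, B (X x + t • ζ (X x)) μ ν *
          (pd 0 (fun y => X y μ) x + t * pd 0 (fun y => ζ (X y) μ) x) *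
          (pd 1 (fun y => X y ν) x + t * pd 1 (fun y => ζ (X y) ν) x) := by
    funext t
    simp only [Lag, hpd t, harg t]
  rw [hfun]
  have hGt : ∀ μ ν, HasDerivAt (fun t : ℝ => G (X x + t • ζ (X x)) μ ν)
      (∑ ρ, ζ (X x) ρ * pd ρ (fun w => G w μ ν) (X x)) 0 :=
    fun μ ν => hasDerivAt_line (hGs μ ν) (X x) (ζ (X x))
  have hBt : ∀ μ ν, HasDerivAt (fun t : ℝ => B (X x + t • ζ (X x)) μ ν)
      (∑ ρ, ζ (X x) ρ * pd ρ (fun w => B w μ ν) (X x)) 0 :=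
    fun μ ν => hasDerivAt_line (hBs μ ν) (X x) (ζ (X x))
  have hPQ : ∀ (α : Fin 2) (μ : Fin D), HasDerivAt
      (fun t : ℝ => pd α (fun y => X y μ) x + t * pd α (fun y => ζ (X y) μ) x)
      (pd α (fun y => ζ (X y) μ) x) 0 := by
    intro α μ
    simpa using ((hasDerivAt_id (0:ℝ)).mul_const (pd α (fun y => ζ (X y) μ) x)).const_add
      (pd α (fun y => X y μ) x)
  have hMain : HasDerivAt (fun t : ℝ =>
      (Real.sqrt (-(g x).det) * ∑ α, ∑ β, (g x)⁻¹ α β * ∑ μ, ∑ ν,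
        (pd α (fun y => X y μ) x + t * pd α (fun y => ζ (X y) μ) x) *
        (pd β (fun y => X y ν) x + t * pd β (fun y => ζ (X y) ν) x) *
        G (X x + t • ζ (X x)) μ ν) / 2
      + ∑ μ, ∑ ν, B (X x + t • ζ (X x)) μ ν *
          (pd 0 (fun y => X y μ) x + t * pd 0 (fun y => ζ (X y) μ) x) *
          (pd 1 (fun y => X y ν) x + t * pd 1 (fun y => ζ (X y) ν) x))
      ((Real.sqrt (-(g x).det) * ∑ α, ∑ β, (g x)⁻¹ α β * ∑ μ, ∑ ν,
        ((pd α (fun y => ζ (X y) μ) x *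
            (pd β (fun y => X y ν) x + 0 * pd β (fun y => ζ (X y) ν) x)
          + (pd α (fun y => X y μ) x + 0 * pd α (fun y => ζ (X y) μ) x) *
            pd β (fun y => ζ (X y) ν) x) * G (X x + (0:ℝ) • ζ (X x)) μ ν
          + (pd α (fun y => X y μ) x + 0 * pd α (fun y => ζ (X y) μ) x) *
            (pd β (fun y => X y ν) x + 0 * pd β (fun y => ζ (X y) ν) x) *
            ∑ ρ, ζ (X x) ρ * pd ρ (fun w => G w μ ν) (X x))) / 2
      + ∑ μ, ∑ ν,
          (((∑ ρ, ζ (X x) ρ * pd ρ (fun w => B w μ ν) (X x)) *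
              (pd 0 (fun y => X y μ) x + 0 * pd 0 (fun y => ζ (X y) μ) x)
            + B (X x + (0:ℝ) • ζ (X x)) μ ν * pd 0 (fun y => ζ (X y) μ) x) *
            (pd 1 (fun y => X y ν) x + 0 * pd 1 (fun y => ζ (X y) ν) x)
          + B (X x + (0:ℝ) • ζ (X x)) μ ν *
              (pd 0 (fun y => X y μ) x + 0 * pd 0 (fun y => ζ (X y) μ) x) *
              pd 1 (fun y => ζ (X y) ν) x)) 0 := by
    refine HasDerivAt.add ?_ ?_
    · refine HasDerivAt.div_const ?_ 2
      refine HasDerivAt.const_mul _ ?_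
      refine HasDerivAt.fun_sum fun α _ => ?_
      refine HasDerivAt.fun_sum fun β _ => ?_
      refine HasDerivAt.const_mul _ ?_
      refine HasDerivAt.fun_sum fun μ _ => ?_
      refine HasDerivAt.fun_sum fun ν _ => ?_
      exact ((hPQ α μ).mul (hPQ β ν)).mul (hGt μ ν)
    · refine HasDerivAt.fun_sum fun μ _ => ?_
      refine HasDerivAt.fun_sum fun ν _ => ?_
      exact ((hBt μ ν).mul (hPQ 0 μ)).mul (hPQ 1 ν)
  rw [hMain.deriv]
  simp only [zero_mul, add_zero, zero_smul]
  congr 1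
  · congr 2
    refine Finset.sum_congr rfl fun α _ => Finset.sum_congr rfl fun β _ => ?_
    congr 1
    refine Finset.sum_congr rfl fun μ _ => Finset.sum_congr rfl fun ν _ => ?_
    ring
  · refine Finset.sum_congr rfl fun μ _ => Finset.sum_congr rfl fun ν _ => ?_
    ring

lemma rhs_eval {D : ℕ} (B : (Fin D → ℝ) → Fin D → Fin D → ℝ) (hBs : Smooth2T B)
    (ζ b : (Fin D → ℝ) → Fin D → ℝ) (hζ : SmoothVF ζ) (hb : SmoothVF b)
    (X : (Fin 2 → ℝ) → Fin D → ℝ) (hX : ∀ μ, ContDiff ℝ (⊤ : ℕ∞) fun y => X y μ)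
    (x : Fin 2 → ℝ) (α β : Fin 2) :
    pd β (fun y => ∑ μ, (b (X y) μ + ∑ ν, B (X y) μ ν * ζ (X y) ν)
        * pd α (fun z => X z μ) y) x
    = ∑ μ, ((b (X x) μ + ∑ ν, B (X x) μ ν * ζ (X x) ν)
          * pd β (fun y => pd α (fun z => X z μ) y) x
        + pd α (fun z => X z μ) x *
          ∑ ρ, (pd ρ (fun w => b w μ) (X x)
              + ∑ σ, (B (X x) μ σ * pd ρ (fun w => ζ w σ) (X x)
                  + ζ (X x) σ * pd ρ (fun w => B w μ σ) (X x))) *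
            pd β (fun y => X y ρ) x) := by
  have hbt : ∀ μ, Sm (fun w => b w μ + ∑ σ, B w μ σ * ζ w σ) :=
    fun μ => ContDiff.add (hb μ) (ContDiff.sum fun σ _ => ContDiff.mul (hBs μ σ) (hζ σ))
  have hu : ∀ μ, Sm (fun y => b (X y) μ + ∑ σ, B (X y) μ σ * ζ (X y) σ) :=
    fun μ => sm_comp (hbt μ) hX
  have hv : ∀ μ, Sm (fun y => pd α (fun z => X z μ) y) := fun μ => sm_pd (hX μ) α
  have h1 : pd β (fun y => ∑ μ, (b (X y) μ + ∑ ν, B (X y) μ ν * ζ (X y) ν)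
      * pd α (fun z => X z μ) y) x
      = ∑ μ, pd β (fun y => (b (X y) μ + ∑ ν, B (X y) μ ν * ζ (X y) ν)
          * pd α (fun z => X z μ) y) x :=
    pd_sum (fun μ _ => ((Sm.diff (hu μ)).differentiableAt).mul
      ((Sm.diff (hv μ)).differentiableAt)) β
  rw [h1]
  refine Finset.sum_congr rfl fun μ _ => ?_
  have h2 : pd β (fun y => (b (X y) μ + ∑ ν, B (X y) μ ν * ζ (X y) ν)
      * pd α (fun z => X z μ) y) x
      = (b (X x) μ + ∑ ν, B (X x) μ ν * ζ (X x) ν)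
          * pd β (fun y => pd α (fun z => X z μ) y) x
        + pd α (fun z => X z μ) x
          * pd β (fun y => b (X y) μ + ∑ ν, B (X y) μ ν * ζ (X y) ν) x :=
    pd_mul ((Sm.diff (hu μ)).differentiableAt) ((Sm.diff (hv μ)).differentiableAt) β
  rw [h2]
  congr 1
  congr 1
  have h3 : pd β (fun y => b (X y) μ + ∑ ν, B (X y) μ ν * ζ (X y) ν) x
      = ∑ ρ, pd ρ (fun w => b w μ + ∑ σ, B w μ σ * ζ w σ) (X x)
          * pd β (fun y => X y ρ) x :=
    pd_comp (hbt μ) hX β x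
  rw [h3]
  refine Finset.sum_congr rfl fun ρ _ => ?_
  congr 1
  have hd1 : DifferentiableAt ℝ (fun w => b w μ) (X x) := (Sm.diff (hb μ)).differentiableAt
  have hd2 : DifferentiableAt ℝ (fun w => ∑ σ, B w μ σ * ζ w σ) (X x) :=
    (Sm.diff (ContDiff.sum fun σ _ => ContDiff.mul (hBs μ σ) (hζ σ))).differentiableAt
  rw [pd_add hd1 hd2 ρ]
  congr 1
  rw [pd_sum (f := fun σ w => B w μ σ * ζ w σ) (fun σ _ => ((Sm.diff (hBs μ σ)).differentiableAt).mul
    ((Sm.diff (hζ σ)).differentiableAt)) ρ]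
  refine Finset.sum_congr rfl fun σ _ => ?_
  exact pd_mul ((Sm.diff (hBs μ σ)).differentiableAt) ((Sm.diff (hζ σ)).differentiableAt) ρ

lemma gpart_zero {D : ℕ} (G : (Fin D → ℝ) → Fin D → Fin D → ℝ)
    (ζ : (Fin D → ℝ) → Fin D → ℝ) (X : (Fin 2 → ℝ) → Fin D → ℝ) (x : Fin 2 → ℝ)
    (hA : ∀ μ ν, lieG G ζ μ ν (X x) = 0) (α β : Fin 2) :
    ∑ μ, ∑ ν,
      ((∑ ρ, pd ρ (fun w => ζ w μ) (X x) * pd α (fun y => X y ρ) x)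
          * pd β (fun y => X y ν) x * G (X x) μ ν
        + pd α (fun y => X y μ) x
          * (∑ ρ, pd ρ (fun w => ζ w ν) (X x) * pd β (fun y => X y ρ) x) * G (X x) μ ν
        + pd α (fun y => X y μ) x * pd β (fun y => X y ν) x
          * ∑ ρ, ζ (X x) ρ * pd ρ (fun w => G w μ ν) (X x)) = 0 := by
  have e := key_contract (fun m => pd α (fun y => X y m) x) (fun m => pd β (fun y => X y m) x)
    (fun r m => pd r (fun w => ζ w m) (X x)) (G (X x))
    (fun m n => ∑ ρ, ζ (X x) ρ * pd ρ (fun w => G w m n) (X x))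
    (fun m n => lieG G ζ m n (X x)) (fun m n => rfl)
  refine e.trans ?_
  simp only [hA, mul_zero, Finset.sum_const_zero]

lemma bpart_eq {D : ℕ} (B : (Fin D → ℝ) → Fin D → Fin D → ℝ)
    (ζ : (Fin D → ℝ) → Fin D → ℝ) (X : (Fin 2 → ℝ) → Fin D → ℝ) (x : Fin 2 → ℝ) :
    ∑ μ, ∑ ν,
      ((∑ ρ, ζ (X x) ρ * pd ρ (fun w => B w μ ν) (X x)) * pd 0 (fun y => X y μ) x
          * pd 1 (fun y => X y ν) x
        + B (X x) μ ν * (∑ ρ, pd ρ (fun w => ζ w μ) (X x) * pd 0 (fun y => X y ρ) x)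
          * pd 1 (fun y => X y ν) x
        + B (X x) μ ν * pd 0 (fun y => X y μ) x
          * (∑ ρ, pd ρ (fun w => ζ w ν) (X x) * pd 1 (fun y => X y ρ) x))
    = ∑ μ, ∑ ν, pd 0 (fun y => X y μ) x * pd 1 (fun y => X y ν) x * lieG B ζ μ ν (X x) := by
  have e := key_contract (fun m => pd 0 (fun y => X y m) x) (fun m => pd 1 (fun y => X y m) x)
    (fun r m => pd r (fun w => ζ w m) (X x)) (B (X x))
    (fun m n => ∑ ρ, ζ (X x) ρ * pd ρ (fun w => B w m n) (X x))
    (fun m n => lieG B ζ m n (X x)) (fun m n => rfl)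
  refine Eq.trans ?_ e
  refine Finset.sum_congr rfl fun μ _ => Finset.sum_congr rfl fun ν _ => ?_
  ring

lemma lieB_curl {D : ℕ} (B : (Fin D → ℝ) → Fin D → Fin D → ℝ)
    (ζ b : (Fin D → ℝ) → Fin D → ℝ) (hBanti : ∀ x μ ν, B x μ ν = -B x ν μ)
    (z : Fin D → ℝ)
    (hB2 : ∀ μ ν, (∑ ρ, ζ z ρ * Htor B μ ν ρ z)
        = pd ν (fun y => b y μ) z - pd μ (fun y => b y ν) z)
    (μ ν : Fin D) :
    lieG B ζ μ ν z =
      (pd ν (fun w => b w μ) z + ∑ σ, (B z μ σ * pd ν (fun w => ζ w σ) z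
          + ζ z σ * pd ν (fun w => B w μ σ) z))
      - (pd μ (fun w => b w ν) z + ∑ σ, (B z ν σ * pd μ (fun w => ζ w σ) z
          + ζ z σ * pd μ (fun w => B w ν σ) z)) := by
  have hBpd : ∀ (a c d : Fin D), pd a (fun y => B y c d) z = -pd a (fun y => B y d c) z := by
    intro a c d
    rw [show (fun y => B y c d) = (fun y => -B y d c) from funext fun y => hBanti y c d]
    exact pd_neg a z
  have key : lieG B ζ μ ν z
      = (∑ σ, ζ z σ * Htor B μ ν σ z)
        + ((∑ σ, (B z μ σ * pd ν (fun w => ζ w σ) z + ζ z σ * pd ν (fun w => B w μ σ) z))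
          - ∑ σ, (B z ν σ * pd μ (fun w => ζ w σ) z + ζ z σ * pd μ (fun w => B w ν σ) z)) := by
    simp only [lieG, Htor]
    rw [← Finset.sum_sub_distrib, ← Finset.sum_add_distrib, ← Finset.sum_add_distrib,
      ← Finset.sum_add_distrib]
    refine Finset.sum_congr rfl fun σ _ => ?_
    linear_combination (pd μ (fun w => ζ w σ) z) * hBanti z σ ν - (ζ z σ) * hBpd ν μ σ
  rw [key, hB2 μ ν]
  ring

/-- A Killing pair generates a rigid symmetry of the sigma model: the first variation of the
Lagrangian under `δX^μ = ζ^μ(X)` is the total divergence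
`∂₋(b̃_μ(X)∂₊X^μ) − ∂₊(b̃_μ(X)∂₋X^μ)` with `b̃_μ = b_μ + B_{μν}ζ^ν`. -/
theorem stmt16 {D : ℕ} (hD : 1 ≤ D)
    (G B : (Fin D → ℝ) → Fin D → Fin D → ℝ)
    (hGs : Smooth2T G) (hGsym : ∀ x μ ν, G x μ ν = G x ν μ)
    (hBs : Smooth2T B) (hBanti : ∀ x μ ν, B x μ ν = -B x ν μ)
    (g : (Fin 2 → ℝ) → Matrix (Fin 2) (Fin 2) ℝ)
    (hgs : ∀ α β, ContDiff ℝ (⊤ : ℕ∞) fun x => g x α β)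
    (hgsym : ∀ x α β, g x α β = g x β α)
    (hgdet : ∀ x, (g x).det < 0)
    (ζ b : (Fin D → ℝ) → Fin D → ℝ) (hζ : SmoothVF ζ) (hb : SmoothVF b)
    (hK : IsKillingPair G B ζ b)
    (X : (Fin 2 → ℝ) → Fin D → ℝ) (hX : ∀ μ, ContDiff ℝ (⊤ : ℕ∞) fun y => X y μ)
    (x : Fin 2 → ℝ) :
    deriv (fun t : ℝ => Lag G B g (fun y μ => X y μ + t * ζ (X y) μ) x) 0
      = pd 1 (fun y => ∑ μ,
            (b (X y) μ + ∑ ν, B (X y) μ ν * ζ (X y) ν) * pd 0 (fun z => X z μ) y) x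
        - pd 0 (fun y => ∑ μ,
            (b (X y) μ + ∑ ν, B (X y) μ ν * ζ (X y) ν) * pd 1 (fun z => X z μ) y) x := by
  obtain ⟨hA, hB2⟩ := killing_facts G B hGsym hBanti ζ b hK (X x)
  have hQ : ∀ (α : Fin 2) (μ : Fin D), pd α (fun y => ζ (X y) μ) x
      = ∑ ρ, pd ρ (fun w => ζ w μ) (X x) * pd α (fun y => X y ρ) x :=
    fun α μ => pd_comp (hζ μ) hX α x
  rw [deriv_lag G B hGs hBs g ζ hζ X hX x]
  simp only [hQ]
  simp only [gpart_zero G ζ X x hA, mul_zero, Finset.sum_const_zero, zero_div, zero_add]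
  rw [bpart_eq B ζ X x]
  rw [rhs_eval B hBs ζ b hζ hb X hX x 0 1, rhs_eval B hBs ζ b hζ hb X hX x 1 0]
  have hM : ∀ μ : Fin D, pd 1 (fun y => pd 0 (fun z => X z μ) y) x
      = pd 0 (fun y => pd 1 (fun z => X z μ) y) x := fun μ => pd_comm (hX μ) 1 0 x
  simp only [hM]
  rw [← Finset.sum_sub_distrib]
  have step1 : ∀ μ : Fin D,
      ((b (X x) μ + ∑ ν, B (X x) μ ν * ζ (X x) ν)
          * pd 0 (fun y => pd 1 (fun z => X z μ) y) x
        + pd 0 (fun z => X z μ) x *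
          ∑ ρ, (pd ρ (fun w => b w μ) (X x)
              + ∑ σ, (B (X x) μ σ * pd ρ (fun w => ζ w σ) (X x)
                  + ζ (X x) σ * pd ρ (fun w => B w μ σ) (X x))) *
            pd 1 (fun y => X y ρ) x)
      - ((b (X x) μ + ∑ ν, B (X x) μ ν * ζ (X x) ν)
          * pd 0 (fun y => pd 1 (fun z => X z μ) y) x
        + pd 1 (fun z => X z μ) x *
          ∑ ρ, (pd ρ (fun w => b w μ) (X x)
              + ∑ σ, (B (X x) μ σ * pd ρ (fun w => ζ w σ) (X x)
                  + ζ (X x) σ * pd ρ (fun w => B w μ σ) (X x))) *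
            pd 0 (fun y => X y ρ) x)
      = (∑ ρ, (pd ρ (fun w => b w μ) (X x)
              + ∑ σ, (B (X x) μ σ * pd ρ (fun w => ζ w σ) (X x)
                  + ζ (X x) σ * pd ρ (fun w => B w μ σ) (X x))) *
            pd 1 (fun y => X y ρ) x * pd 0 (fun y => X y μ) x)
        - ∑ ρ, (pd ρ (fun w => b w μ) (X x)
              + ∑ σ, (B (X x) μ σ * pd ρ (fun w => ζ w σ) (X x)
                  + ζ (X x) σ * pd ρ (fun w => B w μ σ) (X x))) *
            pd 0 (fun y => X y ρ) x * pd 1 (fun y => X y μ) x := by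
    intro μ
    have e1 : pd 0 (fun z => X z μ) x *
        (∑ ρ, (pd ρ (fun w => b w μ) (X x)
            + ∑ σ, (B (X x) μ σ * pd ρ (fun w => ζ w σ) (X x)
                + ζ (X x) σ * pd ρ (fun w => B w μ σ) (X x))) * pd 1 (fun y => X y ρ) x)
        = ∑ ρ, (pd ρ (fun w => b w μ) (X x)
            + ∑ σ, (B (X x) μ σ * pd ρ (fun w => ζ w σ) (X x)
                + ζ (X x) σ * pd ρ (fun w => B w μ σ) (X x))) *
          pd 1 (fun y => X y ρ) x * pd 0 (fun y => X y μ) x := by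
      rw [Finset.mul_sum]
      exact Finset.sum_congr rfl fun ρ _ => by ring
    have e2 : pd 1 (fun z => X z μ) x *
        (∑ ρ, (pd ρ (fun w => b w μ) (X x)
            + ∑ σ, (B (X x) μ σ * pd ρ (fun w => ζ w σ) (X x)
                + ζ (X x) σ * pd ρ (fun w => B w μ σ) (X x))) * pd 0 (fun y => X y ρ) x)
        = ∑ ρ, (pd ρ (fun w => b w μ) (X x)
            + ∑ σ, (B (X x) μ σ * pd ρ (fun w => ζ w σ) (X x)
                + ζ (X x) σ * pd ρ (fun w => B w μ σ) (X x))) *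
          pd 0 (fun y => X y ρ) x * pd 1 (fun y => X y μ) x := by
      rw [Finset.mul_sum]
      exact Finset.sum_congr rfl fun ρ _ => by ring
    rw [e1, e2]
    ring
  rw [Finset.sum_congr rfl fun μ _ => step1 μ]
  rw [Finset.sum_sub_distrib]
  have e3 := rhs_contract (fun m => pd 0 (fun y => X y m) x) (fun m => pd 1 (fun y => X y m) x)
    (fun r m => pd r (fun w => b w m) (X x)
        + ∑ σ, (B (X x) m σ * pd r (fun w => ζ w σ) (X x)
            + ζ (X x) σ * pd r (fun w => B w m σ) (X x)))
  refine Eq.trans ?_ e3.symm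
  refine Finset.sum_congr rfl fun μ _ => Finset.sum_congr rfl fun ν _ => ?_
  rw [lieB_curl B ζ b hBanti (X x) hB2 μ ν]
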